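/- If a graded element T of a ℤ²-boost-weight-graded algebra possesses the N-property (components of weight (b₁,b₂) vanish for b₁ > 0, for b₁ = 0 with b₂ > 0, and for (b₁,b₂) = (0,0)), then every full contraction of T with the boost-weight-(0,0) metric vanishes; in particular all scalar polynomial invariants built from T are zero. -/

import Mathlib

/-- The N-property for an element of a `ℤ²`-boost-weight-graded algebra:
all components of boost weight `(b₁, b₂)` vanish whenever `b₁ > 0`, when
`b₁ = 0` and `b₂ > 0`, and when `(b₁, b₂) = (0, 0)`. -/
def NProperty {R A : Type*} [CommRing R] [Ring A] [Algebra R A]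
    (𝒜 : ℤ × ℤ → Submodule R A) [GradedRing 𝒜] (T : A) : Prop :=
  ∀ b : ℤ × ℤ, (0 < b.1 ∨ (b.1 = 0 ∧ 0 < b.2) ∨ b = (0, 0)) →
    GradedRing.proj 𝒜 b T = 0

/-- Any full contraction (a linear functional depending only on the
boost-weight-`(0,0)` component, such as contraction with the weight-`(0,0)`
metric) of any power of an element with the N-property vanishes: all scalar
polynomial invariants built from `T` are zero. -/
theorem NProperty.contractions_vanish {R A : Type*} [CommRing R] [Ring A] [Algebra R A]
    (𝒜 : ℤ × ℤ → Submodule R A) [GradedRing 𝒜] (T : A)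
    (hT : NProperty 𝒜 T)
    (tr : A →ₗ[R] R)
    (htr : ∀ a : A, GradedRing.proj 𝒜 (0, 0) a = 0 → tr a = 0) :
    ∀ n : ℕ, 1 ≤ n → tr (T ^ n) = 0 := by
  classical
  -- set of "strictly negative" (lex) boost weights
  set S : Set (ℤ × ℤ) := {b | b.1 < 0 ∨ (b.1 = 0 ∧ b.2 < 0)} with hS
  have hSadd : ∀ b ∈ S, ∀ c ∈ S, b + c ∈ S := by
    rintro ⟨b1, b2⟩ hb ⟨c1, c2⟩ hc
    simp only [hS, Set.mem_setOf_eq, Prod.mk_add_mk] at *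
    omega
  set M : Submodule R A := ⨆ b : S, 𝒜 (b : ℤ × ℤ) with hM
  have hA : ∀ b ∈ S, 𝒜 b ≤ M := fun b hb => le_iSup (fun c : S => 𝒜 (c : ℤ × ℤ)) ⟨b, hb⟩
  have hTM : T ∈ M := by
    rw [← DirectSum.sum_support_decompose 𝒜 T]
    refine Submodule.sum_mem _ fun b hb => ?_
    by_cases hbS : b ∈ S
    · exact hA b hbS (SetLike.coe_mem _)
    · exfalso
      apply DFinsupp.mem_support_iff.mp hb
      have : GradedRing.proj 𝒜 b T = 0 := by
        apply hT
        simp only [hS, Set.mem_setOf_eq, not_or, not_and, not_lt] at hbS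
        rcases b with ⟨b1, b2⟩
        simp only [Prod.mk.injEq]
        omega
      rw [GradedRing.proj_apply] at this
      exact Subtype.ext this
  have hmul : ∀ x ∈ M, ∀ y ∈ M, x * y ∈ M := by
    intro x hx
    refine Submodule.iSup_induction (motive := fun x => ∀ y ∈ M, x * y ∈ M) _ hx ?_ ?_ ?_
    · rintro ⟨b, hb⟩ x hxb y hy
      refine Submodule.iSup_induction (motive := fun y => x * y ∈ M) _ hy ?_ ?_ ?_
      · rintro ⟨c, hc⟩ y hyc
        exact hA (b + c) (hSadd b hb c hc) (SetLike.mul_mem_graded hxb hyc)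
      · simp
      · intro y z hy hz
        rw [mul_add]; exact Submodule.add_mem _ hy hz
    · intro y hy; simp
    · intro a b ha hb y hy
      rw [add_mul]; exact Submodule.add_mem _ (ha y hy) (hb y hy)
  have hpow : ∀ n : ℕ, 1 ≤ n → T ^ n ∈ M := by
    intro n hn
    induction n with
    | zero => omega
    | succ m ih =>
      rcases Nat.eq_or_lt_of_le hn with h | h
      · simpa [← h] using hTM
      · rw [pow_succ]
        exact hmul _ (ih (by omega)) _ hTM
  have hproj : ∀ x ∈ M, GradedRing.proj 𝒜 (0, 0) x = 0 := by
    intro x hx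
    refine Submodule.iSup_induction
      (motive := fun x => GradedRing.proj 𝒜 (0, 0) x = 0) _ hx ?_ ?_ ?_
    · rintro ⟨b, hb⟩ x hxb
      have hne : b ≠ (0, 0) := by
        rcases b with ⟨b1, b2⟩
        simp only [hS, Set.mem_setOf_eq] at hb
        simp only [ne_eq, Prod.mk.injEq]
        omega
      rw [GradedRing.proj_apply, DirectSum.decompose_of_mem_ne 𝒜 hxb hne]
    · simp
    · intro a b ha hb
      rw [map_add, ha, hb, add_zero]
  intro n hn
  exact htr _ (hproj _ (hpow n hn))
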